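/- arXiv:1505.00866 — 2 statements merged into one kernel-verified Lean document; each statement's English description precedes it below -/
import Mathlib

section
/- For all real numbers a and b, |a - b|^3 ≤ 2(a - b)·a·|a| + 2b²·|a - b|. -/
/-- Scalar inequality (E:sc1): for all real `a`, `b`,
`|a - b|^3 ≤ 2(a - b)·a·|a| + 2 b² |a - b|`. -/
theorem scalar_cube_inequality (a b : ℝ) :
    |a - b| ^ 3 ≤ 2 * (a - b) * a * |a| + 2 * b ^ 2 * |a - b| := by
  rcases abs_cases (a - b) with ⟨h1, h1'⟩ | ⟨h1, h1'⟩ <;>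
  rcases abs_cases a with ⟨h2, h2'⟩ | ⟨h2, h2'⟩ <;>
  rw [h1, h2] <;> nlinarith [sq_nonneg (a + b), sq_nonneg (a - b), sq_nonneg (3*a+b), sq_nonneg (a+3*b), sq_nonneg a, sq_nonneg b, h1', h2']
end

section
/- Let θ > 0, f, v ∈ L²(Ω), and g ∈ C(Ω̄) with g > 0. Suppose p : Ω → ℝ² satisfies the fixed-point (optimality) condition g(w)∇(θ div p − (f − v)) = |∇(θ div p − (f − v))| p pointwise. Then |p(x)| ≤ g(w(x)) at every point where ∇(θ div p − (f − v)) ≠ 0; in particular, the iterates p^{n+1} = (p^n + δt ∇(div p^n − (f−v)/θ)) / (1 + (δt/g(w)) |∇(div p^n − (f−v)/θ)|) satisfy |p^{n+1}(x)| ≤ max(|p^n(x)|, g(w(x))) pointwise, so if |p^0| ≤ g(w) then |p^n| ≤ g(w) for all n. -/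
local notation "E2" => EuclideanSpace ℝ (Fin 2)

/-- Divergence of a vector field on ℝ². -/
noncomputable def vdiv (ψ : E2 → E2) (x : E2) : ℝ :=
  ∑ i, fderiv ℝ ψ x (EuclideanSpace.single i 1) i

/-- Constraint maintenance in Chambolle's dual projection for weighted TV:
if the dual variable `q` satisfies the fixed-point condition
`g(w) ∇(θ div q - (f - v)) = |∇(θ div q - (f - v))| q`, then `|q| ≤ g(w)`
wherever the gradient is nonzero; moreover the semi-implicit iterates
`p^{n+1} = (p^n + δt Gⁿ)/(1 + (δt/g(w))|Gⁿ|)` satisfy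
`|p^{n+1}| ≤ max(|p^n|, g(w))` pointwise, so `|p⁰| ≤ g(w)` implies
`|p^n| ≤ g(w)` for all `n`. -/
theorem dual_constraint_maintained (Ω : Set E2) (θ δt : ℝ)
    (hθ : 0 < θ) (hδt : 0 < δt)
    (f v gw : E2 → ℝ) (hgw : ∀ x, 0 < gw x)
    (q : E2 → E2) (G : E2 → E2)
    (hG : G = gradient fun y => θ * vdiv q y - (f y - v y))
    (hfix : ∀ x, gw x • G x = ‖G x‖ • q x)
    (ps : ℕ → E2 → E2) (Gs : ℕ → E2 → E2)
    (hit : ∀ n x, ps (n + 1) x =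
      (1 + (δt / gw x) * ‖Gs n x‖)⁻¹ • (ps n x + δt • Gs n x)) :
    (∀ x, G x ≠ 0 → ‖q x‖ ≤ gw x) ∧
    (∀ n x, ‖ps (n + 1) x‖ ≤ max ‖ps n x‖ (gw x)) ∧
    ((∀ x, ‖ps 0 x‖ ≤ gw x) → ∀ n x, ‖ps n x‖ ≤ gw x) := by
  have key : ∀ n x, ‖ps (n + 1) x‖ ≤ max ‖ps n x‖ (gw x) := by
    intro n x
    have hg := hgw x
    set p := ps n x
    set Gx := Gs n x
    set M := max ‖p‖ (gw x) with hM
    have hden : 0 < 1 + (δt / gw x) * ‖Gx‖ := by positivity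
    rw [hit n x, norm_smul, Real.norm_eq_abs, abs_of_pos (inv_pos.mpr hden),
      inv_mul_le_iff₀ hden]
    have hna : ‖p + δt • Gx‖ ≤ ‖p‖ + δt * ‖Gx‖ := by
      calc ‖p + δt • Gx‖ ≤ ‖p‖ + ‖δt • Gx‖ := norm_add_le _ _
        _ = ‖p‖ + δt * ‖Gx‖ := by rw [norm_smul, Real.norm_eq_abs, abs_of_pos hδt]
    have h1 : gw x * ((δt / gw x) * ‖Gx‖) = δt * ‖Gx‖ := by field_simp
    have h2 : gw x * ((δt / gw x) * ‖Gx‖) ≤ M * ((δt / gw x) * ‖Gx‖) :=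
      mul_le_mul_of_nonneg_right (le_max_right _ _) (by positivity)
    have h3 : ‖p‖ ≤ M := le_max_left _ _
    nlinarith
  refine ⟨?_, key, ?_⟩
  · intro x hx
    have h := congrArg norm (hfix x)
    rw [norm_smul, norm_smul, Real.norm_eq_abs, Real.norm_eq_abs,
      abs_of_pos (hgw x), abs_of_nonneg (norm_nonneg _)] at h
    have hGn : 0 < ‖G x‖ := norm_pos_iff.mpr hx
    nlinarith
  · intro h0 n
    induction n with
    | zero => exact h0
    | succ n ih =>
      intro x
      exact (key n x).trans (max_le (ih x) le_rfl)
end
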